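/- The quiver Γ^7_{1,2,2} of coloured oriented single and paired diagonals of a regular heptagon is isomorphic as a stable translation quiver to Z E_6/⟨ρ τ^{-7}⟩, where ρ is the automorphism of Z E_6 induced by the order-two diagram automorphism of the tree E_6; this quotient is the Auslander–Reiten quiver of the cluster category C_{E_6} = D^b(mod kE_6)/τ^{-1}Σ, on which the shift Σ acts as ρτ^{-6}. -/

import Mathlib

/-!
Coloured oriented single and paired diagonals in a regular polygon, following
L. Lamberti, "Combinatorial model for the cluster categories of type E".

The vertices of the regular `m`-gon `Π` are labelled by `ZMod m` (clockwise).
A coloured oriented diagonal `[i,j]_c` is encoded by the structure `Diag`;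
the colour `P` encodes a *paired* diagonal `[i,j]_P = {[i,j]_R, [j,i]_B}`.
-/

inductive Colour : Type
  | R : Colour
  | B : Colour
  | P : Colour
deriving DecidableEq

/-- A coloured oriented (single or paired) diagonal `[i,j]_c` of the regular
`m`-gon (for `m = 0` we interpret `ZMod 0 = ℤ` as the infinite-sided polygon). -/
structure Diag (m : ℕ) where
  i : ZMod m
  j : ZMod m
  c : Colour
deriving DecidableEq

/-- The simultaneous change of colour and orientation:
`ρ([i,j]_R) = [j,i]_B`, `ρ([i,j]_B) = [j,i]_R`, `ρ([i,j]_P) = [i,j]_P`. -/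
def rho {m : ℕ} : Diag m → Diag m
  | ⟨i, j, Colour.R⟩ => ⟨j, i, Colour.B⟩
  | ⟨i, j, Colour.B⟩ => ⟨j, i, Colour.R⟩
  | ⟨i, j, Colour.P⟩ => ⟨i, j, Colour.P⟩

/-- The anticlockwise rotation `[i,j]_c ↦ [i-1,j-1]_c`. -/
def shiftD {m : ℕ} (d : Diag m) : Diag m := ⟨d.i - 1, d.j - 1, d.c⟩

/-- The slice of `Π_{r,s,t}` based at the vertex `i` of `Π`:
the paired diagonals `[i,i+2]_P, …, [i,i+r+2]_P`, the red single diagonals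
`[i,i+r+3]_R, …, [i,i+r+s+2]_R` and the blue single diagonals
`[i+r+3,i]_B, …, [i+r+t+2,i]_B`. -/
def PiSetAt (r s t : ℕ) {m : ℕ} (i : ZMod m) : Set (Diag m) :=
  {d | (∃ k : ℕ, 2 ≤ k ∧ k ≤ r + 2 ∧ d = ⟨i, i + (k : ZMod m), Colour.P⟩) ∨
       (∃ k : ℕ, r + 3 ≤ k ∧ k ≤ r + s + 2 ∧ d = ⟨i, i + (k : ZMod m), Colour.R⟩) ∨
       (∃ k : ℕ, r + 3 ≤ k ∧ k ≤ r + t + 2 ∧ d = ⟨i + (k : ZMod m), i, Colour.B⟩)}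

/-- The set `Π_{r,s,t}` of coloured oriented single and paired diagonals of the
regular `m`-gon associated to the tree `T_{r,s,t}`. -/
def PiSet (r s t m : ℕ) : Set (Diag m) := ⋃ i : ZMod m, PiSetAt r s t i

open Classical in
/-- The translation `τ` on coloured oriented diagonals: the anticlockwise
rotation `[i,j]_c ↦ [i-1,j-1]_c`, composed with `ρ^{m}` on the first slice
`Π_{r,s,t}|_1` when the tree is symmetric (`s = t`). -/
noncomputable def tauD (r s t : ℕ) {m : ℕ} (d : Diag m) : Diag m :=
  if s = t ∧ d ∈ PiSetAt r s t (1 : ZMod m) then rho^[m] (shiftD d) else shiftD d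

/-- Minimal clockwise rotations (before the colour adjustment at the seam):
`[k,l]_c → [k,l+1]_c`, `[k,l]_c → [k+1,l]_c`, together with
`[k,k+r+2]_P → [k,k+r+3]_R`, `[k,k+r+2]_P → [k+r+3,k]_B`,
`[k,k+r+3]_R → [k+1,k+r+3]_P` and `[k+r+3,k]_B → [k+1,k+r+3]_P`. -/
def Rot (r : ℕ) {m : ℕ} (a b : Diag m) : Prop :=
  b = ⟨a.i, a.j + 1, a.c⟩ ∨ b = ⟨a.i + 1, a.j, a.c⟩ ∨
  (∃ k : ZMod m, a = ⟨k, k + ((r : ZMod m) + 2), Colour.P⟩ ∧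
    (b = ⟨k, k + ((r : ZMod m) + 3), Colour.R⟩ ∨
     b = ⟨k + ((r : ZMod m) + 3), k, Colour.B⟩)) ∨
  (∃ k : ZMod m,
    (a = ⟨k, k + ((r : ZMod m) + 3), Colour.R⟩ ∨
     a = ⟨k + ((r : ZMod m) + 3), k, Colour.B⟩) ∧
    b = ⟨k + 1, k + ((r : ZMod m) + 3), Colour.P⟩)

/-- In the symmetric case `s = t` with an odd-sided polygon, the arrows whose
source lies in `τ(Π_{r,t,t}|_1)` and whose (unadjusted) target lies in the
first slice `Π_{r,t,t}|_1` additionally change colour and orientation. -/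
def SeamTwist (r s t m : ℕ) (a b₀ : Diag m) : Prop :=
  s = t ∧ Odd m ∧ a ∈ (tauD r s t) '' (PiSetAt r s t (1 : ZMod m)) ∧
    b₀ ∈ PiSetAt r s t (1 : ZMod m)

/-- The arrows of the quiver `Γ^{m}_{r,s,t}`: minimal clockwise rotations
between elements of `Π_{r,s,t}`, adjusted by `ρ` at the seam. -/
def ArrowD (r s t m : ℕ) (a b : Diag m) : Prop :=
  a ∈ PiSet r s t m ∧ b ∈ PiSet r s t m ∧
    ∃ b₀, Rot r a b₀ ∧
      ((SeamTwist r s t m a b₀ ∧ b = rho b₀) ∨ (¬ SeamTwist r s t m a b₀ ∧ b = b₀))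

/-- The vertices of the tree `T_{r,s,t}`: a central vertex together with three
legs having `r`, `s`, `t` vertices respectively. -/
inductive TVert (r s t : ℕ) : Type
  | center : TVert r s t
  | legA : Fin r → TVert r s t
  | legB : Fin s → TVert r s t
  | legC : Fin t → TVert r s t
deriving DecidableEq

/-- An orientation of the tree `T_{r,s,t}`: the `A`-leg points towards the
centre, the `B`- and `C`-legs point away from it. -/
def TArrow {r s t : ℕ} (x y : TVert r s t) : Prop :=
  (∃ k l : Fin r, (l : ℕ) + 1 = (k : ℕ) ∧ x = TVert.legA k ∧ y = TVert.legA l) ∨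
  (∃ k : Fin r, (k : ℕ) = 0 ∧ x = TVert.legA k ∧ y = TVert.center) ∨
  (∃ k : Fin s, (k : ℕ) = 0 ∧ x = TVert.center ∧ y = TVert.legB k) ∨
  (∃ k l : Fin s, (k : ℕ) + 1 = (l : ℕ) ∧ x = TVert.legB k ∧ y = TVert.legB l) ∨
  (∃ k : Fin t, (k : ℕ) = 0 ∧ x = TVert.center ∧ y = TVert.legC k) ∨
  (∃ k l : Fin t, (k : ℕ) + 1 = (l : ℕ) ∧ x = TVert.legC k ∧ y = TVert.legC l)

/-- The order-two graph automorphism of a symmetric tree `T_{r,t,t}`,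
exchanging its two legs of length `t`. -/
def treeRho {r t : ℕ} : TVert r t t → TVert r t t
  | TVert.center => TVert.center
  | TVert.legA k => TVert.legA k
  | TVert.legB k => TVert.legC k
  | TVert.legC k => TVert.legB k

/-- `treeRho` as a permutation. -/
def treeRhoPerm (r t : ℕ) : Equiv.Perm (TVert r t t) :=
  Function.Involutive.toPerm treeRho (by intro x; cases x <;> rfl)

/-- The translation of the repetitive quiver `ℤQ`: `τ(m,i) = (m-1,i)`. -/
def ZTau {V : Type} (x : ℤ × V) : ℤ × V := (x.1 - 1, x.2)

/-- The arrows of the repetitive quiver `ℤQ` of a quiver with arrow relation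
`A`: for each arrow `i → j` of `Q` there are arrows `(m,i) → (m,j)` and
`(m,j) → (m+1,i)`. -/
def ZArrow {V : Type} (A : V → V → Prop) (x y : ℤ × V) : Prop :=
  (y.1 = x.1 ∧ A x.2 y.2) ∨ (y.1 = x.1 + 1 ∧ A y.2 x.2)

/-- The automorphism `τ^{-m} σ` of `ℤQ` given by shifting `m` steps to the
right and applying the graph automorphism `σ` of `Q`. -/
def shiftPerm {V : Type} (m : ℕ) (σ : Equiv.Perm V) : Equiv.Perm (ℤ × V) :=
  (Equiv.addRight (m : ℤ)).prodCongr σ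

/-- `φ` exhibits the quiver `Γ^{m}_{r,s,t}` (with vertex set `PiSet r s t m`,
arrow relation `ArrowD` and translation `tauD`) as the quotient of the
repetitive quiver `ℤQ` (with arrow relation `ZArrow A` and translation `ZTau`)
by the cyclic group generated by the automorphism `g`, as stable translation
quivers: `φ` is surjective onto the vertex set, its fibres are exactly the
`g`-orbits, it commutes with the translations, and the arrows of
`Γ^{m}_{r,s,t}` correspond exactly to the `g`-orbits of arrows of `ℤQ`. -/
def IsQuotientIso (r s t m : ℕ) {V : Type} (A : V → V → Prop)
    (g : Equiv.Perm (ℤ × V)) (φ : ℤ × V → Diag m) : Prop :=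
  (∀ x, φ x ∈ PiSet r s t m) ∧
  (∀ d ∈ PiSet r s t m, ∃ x, φ x = d) ∧
  (∀ x y, φ x = φ y ↔ ∃ k : ℤ, (g ^ k) x = y) ∧
  (∀ x, φ (ZTau x) = tauD r s t (φ x)) ∧
  (∀ x y, ArrowD r s t m (φ x) (φ y) ↔
    ∃ y', (∃ k : ℤ, (g ^ k) y = y') ∧ ZArrow A x y')


section AuxMy

instance : Fintype Colour :=
  ⟨{Colour.R, Colour.B, Colour.P}, by intro x; cases x <;> simp⟩

def diagEquiv (m : ℕ) : Diag m ≃ ZMod m × ZMod m × Colour where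
  toFun d := (d.i, d.j, d.c)
  invFun p := ⟨p.1, p.2.1, p.2.2⟩
  left_inv d := rfl
  right_inv p := rfl

instance : Fintype (Diag 7) := Fintype.ofEquiv _ (diagEquiv 7).symm

instance : Fintype (TVert 1 2 2) :=
  ⟨{TVert.center, TVert.legA 0, TVert.legB 0, TVert.legB 1, TVert.legC 0, TVert.legC 1},
   by intro x
      cases x with
      | center => simp
      | legA k => fin_cases k <;> simp
      | legB k => fin_cases k <;> simp
      | legC k => fin_cases k <;> simp⟩

lemma mem_PiSetAt_iff (i : ZMod 7) (d : Diag 7) :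
    d ∈ PiSetAt 1 2 2 i ↔
      (d.c = Colour.P ∧ d.i = i ∧ (d.j = i + 2 ∨ d.j = i + 3)) ∨
      (d.c = Colour.R ∧ d.i = i ∧ (d.j = i + 4 ∨ d.j = i + 5)) ∨
      (d.c = Colour.B ∧ d.j = i ∧ (d.i = i + 4 ∨ d.i = i + 5)) := by
  constructor
  · rintro (⟨k, hk1, hk2, rfl⟩ | ⟨k, hk1, hk2, rfl⟩ | ⟨k, hk1, hk2, rfl⟩) <;>
      interval_cases k <;> norm_num
  · rcases d with ⟨di, dj, dc⟩
    dsimp only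
    rintro (⟨rfl, rfl, (rfl | rfl)⟩ | ⟨rfl, rfl, (rfl | rfl)⟩ | ⟨rfl, rfl, (rfl | rfl)⟩)
    · exact Or.inl ⟨2, by norm_num, by norm_num, by push_cast; rfl⟩
    · exact Or.inl ⟨3, by norm_num, by norm_num, by push_cast; rfl⟩
    · exact Or.inr (Or.inl ⟨4, by norm_num, by norm_num, by push_cast; rfl⟩)
    · exact Or.inr (Or.inl ⟨5, by norm_num, by norm_num, by push_cast; rfl⟩)
    · exact Or.inr (Or.inr ⟨4, by norm_num, by norm_num, by push_cast; rfl⟩)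
    · exact Or.inr (Or.inr ⟨5, by norm_num, by norm_num, by push_cast; rfl⟩)

instance (i : ZMod 7) (d : Diag 7) : Decidable (d ∈ PiSetAt 1 2 2 i) :=
  decidable_of_iff _ (mem_PiSetAt_iff i d).symm

lemma mem_PiSet_iff (d : Diag 7) :
    d ∈ PiSet 1 2 2 7 ↔ ∃ i : ZMod 7, d ∈ PiSetAt 1 2 2 i := by
  simp [PiSet, Set.mem_iUnion]

instance (d : Diag 7) : Decidable (d ∈ PiSet 1 2 2 7) :=
  decidable_of_iff _ (mem_PiSet_iff d).symm

instance (a b : Diag 7) : Decidable (Rot 1 a b) := by unfold Rot; infer_instance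

instance (x y : TVert 1 2 2) : Decidable (TArrow x y) := by unfold TArrow; infer_instance

set_option maxRecDepth 10000 in
lemma rho_iter7 : ∀ d : Diag 7, rho^[7] d = rho d := by decide

end AuxMy
def TD (d : Diag 7) : Diag 7 :=
  if d ∈ PiSetAt 1 2 2 (1 : ZMod 7) then rho (shiftD d) else shiftD d

lemma tauD_eq (d : Diag 7) : tauD 1 2 2 d = TD d := by
  unfold tauD TD
  by_cases h : d ∈ PiSetAt 1 2 2 (1 : ZMod 7)
  · rw [if_pos ⟨rfl, h⟩, if_pos h, rho_iter7]
  · rw [if_neg (by tauto), if_neg h]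

def bV : TVert 1 2 2 → Diag 7
  | TVert.center => ⟨0, 3, Colour.P⟩
  | TVert.legA _ => ⟨0, 2, Colour.P⟩
  | TVert.legB k => ⟨0, 4 + ((k : ℕ) : ZMod 7), Colour.R⟩
  | TVert.legC k => ⟨4 + ((k : ℕ) : ZMod 7), 0, Colour.B⟩

def Phif (a : ℕ) (v : TVert 1 2 2) : Diag 7 := TD^[a] (bV v)

def phif (x : ℤ × TVert 1 2 2) : Diag 7 := Phif ((-x.1 % 14).toNat) x.2

set_option maxRecDepth 10000 in
lemma seam_img : ∀ a : Diag 7,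
    ((∃ d, d ∈ PiSetAt 1 2 2 (1 : ZMod 7) ∧ TD d = a) ↔ a ∈ PiSetAt 1 2 2 (0 : ZMod 7)) := by
  decide

lemma seam_iff (a b₀ : Diag 7) :
    SeamTwist 1 2 2 7 a b₀ ↔
      (a ∈ PiSetAt 1 2 2 (0 : ZMod 7) ∧ b₀ ∈ PiSetAt 1 2 2 (1 : ZMod 7)) := by
  unfold SeamTwist
  have himg : a ∈ tauD 1 2 2 '' PiSetAt 1 2 2 (1 : ZMod 7) ↔
      a ∈ PiSetAt 1 2 2 (0 : ZMod 7) := by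
    rw [← seam_img a]
    constructor
    · rintro ⟨d, hd, rfl⟩; exact ⟨d, hd, (tauD_eq d).symm⟩
    · rintro ⟨d, hd, h⟩; exact ⟨d, hd, by rw [tauD_eq]; exact h⟩
  constructor
  · rintro ⟨-, -, h3, h4⟩; exact ⟨himg.1 h3, h4⟩
  · rintro ⟨h0, h1⟩; exact ⟨rfl, by decide, himg.2 h0, h1⟩

instance (a b₀ : Diag 7) : Decidable (SeamTwist 1 2 2 7 a b₀) :=
  decidable_of_iff _ (seam_iff a b₀).symm

instance (a b : Diag 7) : Decidable (ArrowD 1 2 2 7 a b) := by unfold ArrowD; infer_instance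
set_option maxRecDepth 100000 in
lemma key1 : ∀ a < 14, ∀ v : TVert 1 2 2, Phif a v ∈ PiSet 1 2 2 7 := by decide

set_option maxRecDepth 100000 in
lemma key4 : ∀ a < 14, ∀ v : TVert 1 2 2, Phif ((a + 1) % 14) v = TD (Phif a v) := by decide
set_option maxRecDepth 1000000 in
set_option maxHeartbeats 4000000 in
lemma key2 : ∀ d : Diag 7, d ∈ PiSet 1 2 2 7 → ∃ a, a < 14 ∧ ∃ v, Phif a v = d := by decide

set_option maxRecDepth 1000000 in
set_option maxHeartbeats 4000000 in
lemma key3 : ∀ a < 14, ∀ b < 14, ∀ v w : TVert 1 2 2,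
    (Phif a v = Phif b w ↔ ((a = b ∧ v = w) ∨ (b = (a + 7) % 14 ∧ w = treeRho v))) := by decide
def rotList (a : Diag 7) : List (Diag 7) :=
  [⟨a.i, a.j + 1, a.c⟩, ⟨a.i + 1, a.j, a.c⟩] ++
  (if a.c = Colour.P ∧ a.j = a.i + 3 then
      [⟨a.i, a.i + 4, Colour.R⟩, ⟨a.i + 4, a.i, Colour.B⟩] else []) ++
  (if a.c = Colour.R ∧ a.j = a.i + 4 then [⟨a.i + 1, a.i + 4, Colour.P⟩] else []) ++
  (if a.c = Colour.B ∧ a.i = a.j + 4 then [⟨a.j + 1, a.j + 4, Colour.P⟩] else [])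

lemma c14 : ((1 : ℕ) : ZMod 7) + 2 = 3 := by decide
lemma c15 : ((1 : ℕ) : ZMod 7) + 3 = 4 := by decide

lemma rot_iff (a b : Diag 7) : Rot 1 a b ↔ b ∈ rotList a := by
  unfold Rot rotList
  rw [c14, c15]
  simp only [List.append_assoc, List.mem_append, List.mem_cons, List.not_mem_nil, or_false,
    List.mem_singleton]
  constructor
  · rintro (rfl | rfl | ⟨k, rfl, (rfl | rfl)⟩ | ⟨k, (rfl | rfl), rfl⟩) <;> simp_all
  · rcases a with ⟨ai, aj, ac⟩
    dsimp only
    rintro ((rfl | rfl) | hb | hb | hb)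
    · exact Or.inl rfl
    · exact Or.inr (Or.inl rfl)
    · split_ifs at hb with h1
      · obtain ⟨rfl, rfl⟩ := h1
        refine Or.inr (Or.inr (Or.inl ⟨ai, rfl, ?_⟩))
        simpa using hb
      · simp at hb
    · split_ifs at hb with h1
      · obtain ⟨rfl, rfl⟩ := h1
        simp only [List.mem_singleton] at hb
        subst hb
        exact Or.inr (Or.inr (Or.inr ⟨ai, Or.inl rfl, rfl⟩))
      · simp at hb
    · split_ifs at hb with h1
      · obtain ⟨rfl, rfl⟩ := h1
        simp only [List.mem_singleton] at hb
        subst hb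
        exact Or.inr (Or.inr (Or.inr ⟨aj, Or.inr rfl, rfl⟩))
      · simp at hb
def arrowB (a b : Diag 7) : Prop :=
  a ∈ PiSet 1 2 2 7 ∧ b ∈ PiSet 1 2 2 7 ∧
    ∃ b₀ ∈ rotList a,
      if a ∈ PiSetAt 1 2 2 (0 : ZMod 7) ∧ b₀ ∈ PiSetAt 1 2 2 (1 : ZMod 7)
      then b = rho b₀ else b = b₀

instance (a b : Diag 7) : Decidable (arrowB a b) := by unfold arrowB; infer_instance

lemma arrowD_iff (a b : Diag 7) : ArrowD 1 2 2 7 a b ↔ arrowB a b := by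
  unfold ArrowD arrowB
  refine and_congr_right fun _ => and_congr_right fun _ => ?_
  constructor
  · rintro ⟨b₀, hrot, (⟨hs, hb⟩ | ⟨hs, hb⟩)⟩
    · exact ⟨b₀, (rot_iff _ _).1 hrot, by rw [if_pos ((seam_iff a b₀).1 hs)]; exact hb⟩
    · exact ⟨b₀, (rot_iff _ _).1 hrot,
        by rw [if_neg (fun hc => hs ((seam_iff a b₀).2 hc))]; exact hb⟩
  · rintro ⟨b₀, hmem, hcond⟩
    refine ⟨b₀, (rot_iff _ _).2 hmem, ?_⟩
    by_cases hs : a ∈ PiSetAt 1 2 2 (0 : ZMod 7) ∧ b₀ ∈ PiSetAt 1 2 2 (1 : ZMod 7)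
    · exact Or.inl ⟨(seam_iff a b₀).2 hs, by rwa [if_pos hs] at hcond⟩
    · exact Or.inr ⟨fun hc => hs ((seam_iff a b₀).1 hc), by rwa [if_neg hs] at hcond⟩

set_option maxRecDepth 2000000 in
set_option maxHeartbeats 10000000 in
lemma key5B : ∀ a < 14, ∀ b < 14, ∀ v w : TVert 1 2 2,
    (arrowB (Phif a v) (Phif b w) ↔
      ((b = a ∧ TArrow v w) ∨ (b = (a + 7) % 14 ∧ TArrow v (treeRho w)) ∨
       (b = (a + 13) % 14 ∧ TArrow w v) ∨ (b = (a + 6) % 14 ∧ TArrow (treeRho w) v))) := by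
  decide
lemma sigma_sq : (treeRhoPerm 1 2) ^ (2 : ℕ) = 1 := by
  rw [pow_two]
  exact Equiv.ext fun v => by cases v <;> rfl

lemma sigma_zpow_even (k : ℤ) (h : k % 2 = 0) : (treeRhoPerm 1 2) ^ k = 1 := by
  obtain ⟨m, rfl⟩ : ∃ m, k = 2 * m := ⟨k / 2, by omega⟩
  rw [zpow_mul, show ((2 : ℤ)) = ((2 : ℕ) : ℤ) from rfl, zpow_natCast, sigma_sq, one_zpow]

lemma sigma_zpow_odd (k : ℤ) (h : k % 2 = 1) : (treeRhoPerm 1 2) ^ k = treeRhoPerm 1 2 := by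
  obtain ⟨m, rfl⟩ : ∃ m, k = 2 * m + 1 := ⟨k / 2, by omega⟩
  rw [zpow_add, zpow_one, zpow_mul, show ((2 : ℤ)) = ((2 : ℕ) : ℤ) from rfl, zpow_natCast,
    sigma_sq, one_zpow, one_mul]

lemma treeRhoPerm_apply (v : TVert 1 2 2) : treeRhoPerm 1 2 v = treeRho v := rfl

lemma g_pow (k : ℤ) : ∀ (n : ℤ) (v : TVert 1 2 2),
    ((shiftPerm 7 (treeRhoPerm 1 2)) ^ k) (n, v) = (n + 7 * k, ((treeRhoPerm 1 2) ^ k) v) := by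
  induction k using Int.induction_on with
  | zero => intro n v; simp
  | succ m ih =>
      intro n v
      have h1 : ((m : ℤ) + 1) = (m : ℤ) + 1 := rfl
      rw [zpow_add_one, Equiv.Perm.mul_apply,
        show (shiftPerm 7 (treeRhoPerm 1 2)) (n, v) = (n + 7, treeRhoPerm 1 2 v) from rfl, ih,
        zpow_add_one, Equiv.Perm.mul_apply]
      refine Prod.ext ?_ rfl
      push_cast; ring
  | pred m ih =>
      intro n v
      rw [zpow_sub_one, Equiv.Perm.mul_apply,
        show (shiftPerm 7 (treeRhoPerm 1 2))⁻¹ (n, v) = (n - 7, treeRhoPerm 1 2 v) from rfl, ih,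
        zpow_sub_one, Equiv.Perm.mul_apply,
        show (treeRhoPerm 1 2)⁻¹ v = treeRhoPerm 1 2 v from rfl]
      refine Prod.ext ?_ rfl
      push_cast; ring

/-- Theorem 4.2 for `E₆`. The quiver `Γ^7_{1,2,2}` of
coloured oriented single and paired diagonals of a regular heptagon is
isomorphic, as a stable translation quiver, to `ℤ E₆ / ⟨ρ τ^{-7}⟩`, where
`E₆ = T_{1,2,2}` and `ρ` is induced by the order-two diagram automorphism of
`E₆`.  (This quotient is the AR-quiver of the cluster category
`C_{E₆} = D^b(mod k E₆)/τ^{-1}Σ`, on which `Σ` acts as `ρ τ^{-6}`.) -/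
theorem gamma_heptagon_iso_ZE6_quotient :
    ∃ φ : ℤ × TVert 1 2 2 → Diag 7,
      IsQuotientIso 1 2 2 7 TArrow (shiftPerm 7 (treeRhoPerm 1 2)) φ := by
  refine ⟨phif, ?_, ?_, ?_, ?_, ?_⟩
  · -- vertices land in PiSet
    intro x
    exact key1 ((-x.1 % 14).toNat) (by omega) x.2
  · -- surjectivity
    intro d hd
    obtain ⟨a, ha, v, hv⟩ := key2 d hd
    refine ⟨(-(a : ℤ), v), ?_⟩
    show Phif ((-(-(a : ℤ)) % 14).toNat) v = d
    rw [show ((-(-(a : ℤ)) % 14).toNat) = a from by omega]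
    exact hv
  · -- fibres are orbits
    rintro ⟨n, v⟩ ⟨m, w⟩
    have ha : (-n % 14).toNat < 14 := by omega
    have hb : (-m % 14).toNat < 14 := by omega
    show Phif ((-n % 14).toNat) v = Phif ((-m % 14).toNat) w ↔ _
    rw [key3 _ ha _ hb v w]
    constructor
    · rintro (⟨hab, rfl⟩ | ⟨hab, rfl⟩)
      · refine ⟨2 * ((m - n) / 14), ?_⟩
        rw [g_pow, sigma_zpow_even _ (by omega)]
        have : n + 7 * (2 * ((m - n) / 14)) = m := by omega
        rw [this]; rfl
      · refine ⟨(m - n) / 7, ?_⟩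
        rw [g_pow, sigma_zpow_odd _ (by omega)]
        have : n + 7 * ((m - n) / 7) = m := by omega
        rw [this]; rfl
    · rintro ⟨k, hk⟩
      rw [g_pow] at hk
      have h1 : n + 7 * k = m := congrArg Prod.fst hk
      have h2 : ((treeRhoPerm 1 2) ^ k) v = w := congrArg Prod.snd hk
      rcases Int.even_or_odd k with ⟨j, hj⟩ | ⟨j, hj⟩
      · left
        rw [sigma_zpow_even k (by omega)] at h2
        exact ⟨by omega, by simpa using h2⟩
      · right
        rw [sigma_zpow_odd k (by omega)] at h2
        exact ⟨by omega, by rw [← h2]; rfl⟩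
  · -- translation
    rintro ⟨n, v⟩
    rw [tauD_eq]
    show Phif ((-(n - 1) % 14).toNat) v = TD (Phif ((-n % 14).toNat) v)
    rw [show (-(n - 1) % 14).toNat = ((-n % 14).toNat + 1) % 14 from by omega]
    exact key4 _ (by omega) v
  · -- arrows
    rintro ⟨n, v⟩ ⟨m, w⟩
    have ha : (-n % 14).toNat < 14 := by omega
    have hb : (-m % 14).toNat < 14 := by omega
    show ArrowD 1 2 2 7 (Phif ((-n % 14).toNat) v) (Phif ((-m % 14).toNat) w) ↔ _
    rw [arrowD_iff, key5B _ ha _ hb v w]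
    constructor
    · rintro (⟨h, hA⟩ | ⟨h, hA⟩ | ⟨h, hA⟩ | ⟨h, hA⟩)
      · refine ⟨_, ⟨(n - m) / 7, rfl⟩, ?_⟩
        rw [g_pow, sigma_zpow_even _ (by omega)]
        exact Or.inl ⟨by omega, by simpa using hA⟩
      · refine ⟨_, ⟨(n - m) / 7, rfl⟩, ?_⟩
        rw [g_pow, sigma_zpow_odd _ (by omega)]
        exact Or.inl ⟨by omega, hA⟩
      · refine ⟨_, ⟨(n + 1 - m) / 7, rfl⟩, ?_⟩
        rw [g_pow, sigma_zpow_even _ (by omega)]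
        exact Or.inr ⟨by omega, by simpa using hA⟩
      · refine ⟨_, ⟨(n + 1 - m) / 7, rfl⟩, ?_⟩
        rw [g_pow, sigma_zpow_odd _ (by omega)]
        exact Or.inr ⟨by omega, hA⟩
    · rintro ⟨y', ⟨k, rfl⟩, hZ⟩
      rw [g_pow] at hZ
      rcases hZ with ⟨h1, hA⟩ | ⟨h1, hA⟩
      · simp only at h1 hA
        rcases Int.even_or_odd k with ⟨j, hj⟩ | ⟨j, hj⟩
        · rw [sigma_zpow_even k (by omega)] at hA
          exact Or.inl ⟨by omega, by simpa using hA⟩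
        · rw [sigma_zpow_odd k (by omega)] at hA
          exact Or.inr (Or.inl ⟨by omega, hA⟩)
      · simp only at h1 hA
        rcases Int.even_or_odd k with ⟨j, hj⟩ | ⟨j, hj⟩
        · rw [sigma_zpow_even k (by omega)] at hA
          exact Or.inr (Or.inr (Or.inl ⟨by omega, by simpa using hA⟩))
        · rw [sigma_zpow_odd k (by omega)] at hA
          exact Or.inr (Or.inr (Or.inr ⟨by omega, hA⟩))
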